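/- Let G be a simple graph with minimum degree at least 4, let S be a set of vertices, and let 0 < ε ≤ 1. Let N_{≥2} denote the set of vertices outside S having at least 2 neighbours in S. If the number of edges induced by S ∪ N_{≥2} is at most (1 + ε/2)·|S ∪ N_{≥2}|, then |N(S)| ≥ (2 − ε)|S|, where N(S) is the set of vertices outside S having at least one neighbour in S. -/

import Mathlib

open Finset

/-- Number of edges of `G` with both endpoints in `S`. -/
def edgesWithin {V : Type*} [Fintype V] [DecidableEq V]
    (G : SimpleGraph V) [DecidableRel G.Adj] (S : Finset V) : ℕ :=
  (G.edgeFinset.filter (fun e => ∀ v, v ∈ e → v ∈ S)).card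

section Aux

variable {V : Type*} [Fintype V] [DecidableEq V] (G : SimpleGraph V) [DecidableRel G.Adj]

lemma aux_sum_comm_adj (X Y : Finset V) :
    ∑ v ∈ X, (Y.filter (fun u => G.Adj v u)).card
      = ∑ u ∈ Y, (X.filter (fun v => G.Adj u v)).card := by
  simp_rw [Finset.card_filter]
  rw [Finset.sum_comm]
  apply Finset.sum_congr rfl; intro u _
  apply Finset.sum_congr rfl; intro v _
  simp [G.adj_comm]

lemma aux_sum_filter_adj_eq (A : Finset V) :
    ∑ v ∈ A, (A.filter (fun u => G.Adj v u)).card = 2 * edgesWithin G A := by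
  classical
  let H : SimpleGraph V :=
    { Adj := fun u v => G.Adj u v ∧ u ∈ A ∧ v ∈ A
      symm := ⟨by rintro u v ⟨h, hu, hv⟩; exact ⟨h.symm, hv, hu⟩⟩
      loopless := ⟨fun v h => G.loopless.irrefl v h.1⟩ }
  letI : DecidableRel H.Adj := fun u v => instDecidableAnd
  have hdeg : ∀ v ∈ A, H.degree v = (A.filter (fun u => G.Adj v u)).card := by
    intro v hv
    rw [SimpleGraph.degree, SimpleGraph.neighborFinset_eq_filter]
    apply Finset.card_nbij id
    · intro u hu; simp only [mem_coe, mem_filter, mem_univ] at hu ⊢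
      exact ⟨hu.2.2.2, hu.2.1⟩
    · intro u hu u' hu' h; exact h
    · intro u hu; simp only [mem_coe, mem_filter, mem_univ] at hu ⊢
      exact ⟨u, by simp [H, hu.2, hu.1, hv], rfl⟩
  have hzero : ∀ v, v ∉ A → H.degree v = 0 := by
    intro v hv
    rw [SimpleGraph.degree, Finset.card_eq_zero, SimpleGraph.neighborFinset_eq_filter]
    ext u; simp only [mem_filter, mem_univ, true_and, notMem_empty, iff_false]
    rintro ⟨-, hvA, -⟩; exact hv hvA
  have hsum : ∑ v : V, H.degree v = ∑ v ∈ A, (A.filter (fun u => G.Adj v u)).card := by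
    rw [← Finset.sum_subset (Finset.subset_univ A)]
    · exact Finset.sum_congr rfl hdeg
    · intro v _ hv; exact hzero v hv
  have hedge : H.edgeFinset = G.edgeFinset.filter (fun e => ∀ v, v ∈ e → v ∈ A) := by
    ext e
    induction e using Sym2.ind with
    | _ u v =>
      simp only [SimpleGraph.mem_edgeFinset, mem_filter, SimpleGraph.mem_edgeSet,
        Sym2.mem_iff]
      constructor
      · rintro ⟨h, hu, hv⟩
        exact ⟨h, fun w hw => by rcases hw with rfl | rfl <;> assumption⟩
      · rintro ⟨h, hw⟩
        exact ⟨h, hw u (Or.inl rfl), hw v (Or.inr rfl)⟩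
  rw [← hsum, SimpleGraph.sum_degrees_eq_twice_card_edges, edgesWithin, hedge]

end Aux

theorem stmt_5 {V : Type*} [Fintype V] [DecidableEq V]
    (G : SimpleGraph V) [DecidableRel G.Adj]
    (hdeg : ∀ v, 4 ≤ G.degree v)
    (S : Finset V) (ε : ℝ) (hε0 : 0 < ε) (hε1 : ε ≤ 1)
    -- `N2` is the set of vertices outside `S` with at least 2 neighbours in `S`
    (N2 : Finset V)
    (hN2 : N2 = Finset.univ.filter
      (fun v => v ∉ S ∧ 2 ≤ (S.filter (fun u => G.Adj v u)).card))
    -- `NS` is the set of vertices outside `S` with at least one neighbour in `S`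
    (NS : Finset V)
    (hNS : NS = Finset.univ.filter (fun v => v ∉ S ∧ ∃ u ∈ S, G.Adj v u))
    (h : (edgesWithin G (S ∪ N2) : ℝ) ≤ (1 + ε / 2) * (S ∪ N2).card) :
    (2 - ε) * S.card ≤ (NS.card : ℝ) := by
  classical
  set N1 : Finset V :=
    Finset.univ.filter (fun v => v ∉ S ∧ (S.filter (fun u => G.Adj v u)).card = 1) with hN1
  -- basic set facts
  have hdSN2 : Disjoint S N2 := by
    rw [Finset.disjoint_right, hN2]
    intro v hv
    exact (Finset.mem_filter.1 hv).2.1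
  have hdSN1 : Disjoint S N1 := by
    rw [Finset.disjoint_right, hN1]
    intro v hv
    exact (Finset.mem_filter.1 hv).2.1
  have hdN1N2 : Disjoint N1 N2 := by
    rw [Finset.disjoint_left, hN1, hN2]
    intro v hv hv2
    have h1 := (Finset.mem_filter.1 hv).2.2
    have h2 := (Finset.mem_filter.1 hv2).2.2
    omega
  have hN1NS : N1 ⊆ NS := by
    rw [hN1, hNS]
    intro v hv
    rw [Finset.mem_filter] at hv ⊢
    refine ⟨hv.1, hv.2.1, ?_⟩
    have : (S.filter (fun u => G.Adj v u)).Nonempty := by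
      rw [← Finset.card_pos, hv.2.2]; norm_num
    obtain ⟨u, hu⟩ := this
    rw [Finset.mem_filter] at hu
    exact ⟨u, hu.1, hu.2⟩
  have hN2NS : N2 ⊆ NS := by
    rw [hN2, hNS]
    intro v hv
    rw [Finset.mem_filter] at hv ⊢
    refine ⟨hv.1, hv.2.1, ?_⟩
    have : (S.filter (fun u => G.Adj v u)).Nonempty := by
      rw [← Finset.card_pos]; omega
    obtain ⟨u, hu⟩ := this
    rw [Finset.mem_filter] at hu
    exact ⟨u, hu.1, hu.2⟩
  have hcardNS : N1.card + N2.card ≤ NS.card := by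
    rw [← Finset.card_union_of_disjoint hdN1N2]
    exact Finset.card_le_card (Finset.union_subset hN1NS hN2NS)
  -- abbreviations for the counts
  set a : ℕ := ∑ v ∈ S, (S.filter (fun u => G.Adj v u)).card with ha
  set b : ℕ := ∑ v ∈ S, (N2.filter (fun u => G.Adj v u)).card with hb
  -- degree bound : 4|S| ≤ a + |N1| + b
  have hT1 : ∑ v ∈ S, (N1.filter (fun u => G.Adj v u)).card = N1.card := by
    rw [aux_sum_comm_adj]
    rw [Finset.card_eq_sum_ones N1]
    apply Finset.sum_congr rfl
    intro u hu
    rw [hN1, Finset.mem_filter] at hu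
    exact hu.2.2
  have hdegS : ∀ v ∈ S, 4 ≤ (S.filter (fun u => G.Adj v u)).card
      + (N1.filter (fun u => G.Adj v u)).card + (N2.filter (fun u => G.Adj v u)).card := by
    intro v hv
    have h4 : 4 ≤ G.degree v := hdeg v
    rw [SimpleGraph.degree, SimpleGraph.neighborFinset_eq_filter] at h4
    have hsub : Finset.univ.filter (fun u => G.Adj v u)
        ⊆ ((S ∪ N1) ∪ N2).filter (fun u => G.Adj v u) := by
      intro u hu
      rw [Finset.mem_filter] at hu ⊢
      refine ⟨?_, hu.2⟩
      by_cases huS : u ∈ S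
      · exact Finset.mem_union_left _ (Finset.mem_union_left _ huS)
      · have hpos : 1 ≤ (S.filter (fun w => G.Adj u w)).card := by
          rw [Nat.one_le_iff_ne_zero, Ne, Finset.card_eq_zero]
          intro hempty
          have : v ∈ S.filter (fun w => G.Adj u w) :=
            Finset.mem_filter.2 ⟨hv, hu.2.symm⟩
          rw [hempty] at this
          exact absurd this (Finset.notMem_empty v)
        rcases Nat.lt_or_ge (S.filter (fun w => G.Adj u w)).card 2 with h1 | h2
        · have : u ∈ N1 := by
            rw [hN1, Finset.mem_filter]
            exact ⟨Finset.mem_univ u, huS, by omega⟩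
          exact Finset.mem_union_left _ (Finset.mem_union_right _ this)
        · have : u ∈ N2 := by
            rw [hN2, Finset.mem_filter]
            exact ⟨Finset.mem_univ u, huS, h2⟩
          exact Finset.mem_union_right _ this
    calc 4 ≤ (Finset.univ.filter (fun u => G.Adj v u)).card := h4
      _ ≤ (((S ∪ N1) ∪ N2).filter (fun u => G.Adj v u)).card :=
          Finset.card_le_card hsub
      _ ≤ _ := by
          rw [Finset.filter_union, Finset.filter_union]
          calc _ ≤ ((S.filter (fun u => G.Adj v u)) ∪ (N1.filter (fun u => G.Adj v u))).card
                + (N2.filter (fun u => G.Adj v u)).card := Finset.card_union_le _ _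
            _ ≤ _ := by
                have := Finset.card_union_le (S.filter (fun u => G.Adj v u))
                  (N1.filter (fun u => G.Adj v u))
                omega
  have hI1 : 4 * S.card ≤ a + N1.card + b := by
    have : 4 * S.card ≤ ∑ v ∈ S, ((S.filter (fun u => G.Adj v u)).card
        + (N1.filter (fun u => G.Adj v u)).card + (N2.filter (fun u => G.Adj v u)).card) := by
      calc 4 * S.card = ∑ _v ∈ S, 4 := by rw [Finset.sum_const, smul_eq_mul, mul_comm]
        _ ≤ _ := Finset.sum_le_sum hdegS
    rw [Finset.sum_add_distrib, Finset.sum_add_distrib, hT1] at this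
    omega
  -- b ≥ 2 |N2|
  have hbsym : b = ∑ u ∈ N2, (S.filter (fun v => G.Adj u v)).card := aux_sum_comm_adj G S N2
  have hI2 : 2 * N2.card ≤ b := by
    rw [hbsym]
    calc 2 * N2.card = ∑ _u ∈ N2, 2 := by rw [Finset.sum_const, smul_eq_mul, mul_comm]
      _ ≤ _ := by
        apply Finset.sum_le_sum
        intro u hu
        rw [hN2, Finset.mem_filter] at hu
        exact hu.2.2
  -- a + 2b ≤ 2 e(S ∪ N2)
  have hI3 : a + 2 * b ≤ 2 * edgesWithin G (S ∪ N2) := by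
    rw [← aux_sum_filter_adj_eq, Finset.sum_union hdSN2]
    have hsplit : ∀ v, ((S ∪ N2).filter (fun u => G.Adj v u)).card
        = (S.filter (fun u => G.Adj v u)).card + (N2.filter (fun u => G.Adj v u)).card := by
      intro v
      rw [Finset.filter_union]
      exact Finset.card_union_of_disjoint
        (Finset.disjoint_filter_filter hdSN2)
    simp_rw [hsplit]
    rw [Finset.sum_add_distrib, Finset.sum_add_distrib, ← ha, ← hb, ← hbsym]
    omega
  -- cast to ℝ and finish
  have hcardU : ((S ∪ N2).card : ℝ) = (S.card : ℝ) + (N2.card : ℝ) := by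
    rw [Finset.card_union_of_disjoint hdSN2]; push_cast; ring
  have hI1' : (4 : ℝ) * S.card ≤ (a : ℝ) + N1.card + b := by exact_mod_cast hI1
  have hI2' : (2 : ℝ) * N2.card ≤ (b : ℝ) := by exact_mod_cast hI2
  have hI3' : (a : ℝ) + 2 * b ≤ 2 * (edgesWithin G (S ∪ N2) : ℝ) := by exact_mod_cast hI3
  have hI5' : (N1.card : ℝ) + N2.card ≤ (NS.card : ℝ) := by exact_mod_cast hcardNS
  rw [hcardU] at h
  nlinarith [mul_nonneg (sub_nonneg.2 hε1) (Nat.cast_nonneg N2.card : (0:ℝ) ≤ N2.card),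
    (Nat.cast_nonneg N2.card : (0:ℝ) ≤ N2.card), (Nat.cast_nonneg S.card : (0:ℝ) ≤ S.card)]
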